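/- Let u = 0^n in Q_n and for 1 ≤ h ≤ n+1 let S_h = {u, u^1, ..., u^{h−1}} consist of u together with its first h−1 neighbors (u^i obtained by flipping coordinate i). Then the induced subgraph on S_h is a star K_{1,h−1}, and |N(S_h)| = (n−h+1) + (n−1)(h−1) − C(h−1, 2), which equals b_v(h; Q_n) = −h²/2 + (n − 1/2)h + 1 for 2 ≤ h ≤ n+1. -/

import Mathlib

open Finset


/-- The `n`-dimensional hypercube: vertices are binary strings of length `n`,
adjacent iff they differ in exactly one coordinate. -/
def Qube (n : ℕ) : SimpleGraph (Fin n → Bool) where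
  Adj u v := hammingDist u v = 1
  symm := ⟨fun u v h => by show hammingDist v u = 1; rwa [hammingDist_comm]⟩
  loopless := ⟨fun u h => by simp only [hammingDist_self] at h; exact absurd h (by norm_num)⟩

instance (n : ℕ) : DecidableRel (Qube n).Adj :=
  fun u v => (inferInstance : Decidable (hammingDist u v = 1))

/-- The vertex boundary of a vertex set `H` in `Qube n`. -/
def vBoundary (n : ℕ) (H : Finset (Fin n → Bool)) : Finset (Fin n → Bool) :=
  Finset.univ.filter (fun v => v ∉ H ∧ ∃ u ∈ H, (Qube n).Adj u v)

/-- The minimum `m`-vertex boundary number of `Qube n`. -/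
noncomputable def bv (n m : ℕ) : ℕ :=
  sInf { k | ∃ H : Finset (Fin n → Bool), H.card = m ∧ (vBoundary n H).card = k }

/-- The hypercube with a vertex set `S` deleted. -/
def QDel (n : ℕ) (S : Finset (Fin n → Bool)) :
    SimpleGraph ((↑(Sᶜ) : Set (Fin n → Bool))) :=
  (Qube n).induce (↑(Sᶜ) : Set (Fin n → Bool))

/-- The `k`-extra connectivity of `Qube n`: the minimum size of a vertex set `T`
such that `Qube n − T` is disconnected and every component has at least `k+1` vertices. -/
noncomputable def extraConn (n k : ℕ) : ℕ :=
  sInf { t | ∃ T : Finset (Fin n → Bool), T.card = t ∧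
    ¬ (QDel n T).Connected ∧
    ∀ c : (QDel n T).ConnectedComponent,
      k + 1 ≤ {v | (QDel n T).connectedComponentMk v = c}.ncard }



lemma bool_ne_iff {a b : Bool} : a ≠ b ↔ b = !a := by cases a <;> cases b <;> simp

lemma ham_def {n : ℕ} (v w : Fin n → Bool) :
    hammingDist v w = #{i | v i ≠ w i} := rfl

lemma ham_update_ne {n : ℕ} (v : Fin n → Bool) (i : Fin n) :
    hammingDist v (Function.update v i (!v i)) = 1 := by
  rw [ham_def]
  convert Finset.card_singleton i
  ext j
  rcases eq_or_ne j i with rfl | hj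
  · simp
  · simp [Function.update_of_ne hj, hj]

lemma ham_one_iff {n : ℕ} (v w : Fin n → Bool) :
    hammingDist v w = 1 ↔ ∃ i, w = Function.update v i (!v i) := by
  constructor
  · intro hd
    rw [ham_def, Finset.card_eq_one] at hd
    obtain ⟨i, hi⟩ := hd
    refine ⟨i, funext fun j => ?_⟩
    rcases eq_or_ne j i with rfl | hj
    · have : j ∈ ({i | v i ≠ w i} : Finset (Fin n)) := by rw [hi]; exact mem_singleton_self j
      simp only [mem_filter] at this
      rw [Function.update_self]
      exact (bool_ne_iff.mp this.2).symm ▸ rfl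
    · have : j ∉ ({i | v i ≠ w i} : Finset (Fin n)) := by rw [hi]; simpa using hj
      simp only [mem_filter, mem_univ, true_and, not_not] at this
      rw [Function.update_of_ne hj]
      exact this.symm
  · rintro ⟨i, rfl⟩; exact ham_update_ne v i


lemma vB_singleton {n : ℕ} (v : Fin n → Bool) :
    (vBoundary n {v}).card = n := by
  have : vBoundary n {v} = Finset.univ.image (fun i => Function.update v i (!v i)) := by
    ext w
    simp only [vBoundary, mem_filter, mem_univ, true_and, mem_singleton, mem_image,
      Qube, exists_eq_left]
    constructor
    · rintro ⟨-, hadj⟩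
      obtain ⟨i, rfl⟩ := (ham_one_iff v w).mp hadj
      exact ⟨i, rfl⟩
    · rintro ⟨i, -, rfl⟩
      have h1 := ham_update_ne v i
      refine ⟨fun hw => ?_, h1⟩
      rw [hw, hammingDist_self] at h1; simp at h1
  rw [this, Finset.card_image_of_injective _ ?_, card_univ, Fintype.card_fin]
  intro i j hij
  by_contra hne
  have h2 := congrFun hij i
  simp [Function.update_apply, hne] at h2

lemma ham_card_filter {n : ℕ} (f g : Fin n → Bool) :
    hammingDist f g = ∑ j, if f j ≠ g j then 1 else 0 := by
  rw [hammingDist, Finset.card_filter]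

lemma ham_insertNth {n : ℕ} (i : Fin (n + 1)) (x y : Bool) (f g : Fin n → Bool) :
    hammingDist (i.insertNth x f : Fin (n+1) → Bool) (i.insertNth y g) =
      (if x = y then 0 else 1) + hammingDist f g := by
  rw [ham_card_filter, ham_card_filter, Fin.sum_univ_succAbove _ i]
  simp only [Fin.insertNth_apply_same, Fin.insertNth_apply_succAbove]
  congr 1
  by_cases hxy : x = y <;> simp [hxy]

lemma mem_vB {n : ℕ} {H : Finset (Fin n → Bool)} {w : Fin n → Bool} :
    w ∈ vBoundary n H ↔ w ∉ H ∧ ∃ u ∈ H, hammingDist u w = 1 := by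
  simp only [vBoundary, mem_filter, mem_univ, true_and]
  exact Iff.rfl

lemma lift_mem {n : ℕ} (i : Fin (n+1)) (b : Bool) (H : Finset (Fin (n+1) → Bool))
    (w : Fin n → Bool)
    (hw : w ∈ vBoundary n ((H.filter (fun v => v i = b)).image (i.removeNth))) :
    (i.insertNth b w : Fin (n+1) → Bool) ∈ vBoundary (n+1) H := by
  rw [mem_vB] at hw ⊢
  obtain ⟨hw1, u', hu', hadj⟩ := hw
  constructor
  · intro hmem
    apply hw1
    rw [mem_image]
    refine ⟨i.insertNth b w, ?_, by simp⟩
    rw [mem_filter]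
    exact ⟨hmem, by simp⟩
  · rw [mem_image] at hu'
    obtain ⟨u0, hu0, rfl⟩ := hu'
    rw [mem_filter] at hu0
    refine ⟨u0, hu0.1, ?_⟩
    have he : (i.insertNth (u0 i) (i.removeNth u0) : Fin (n+1) → Bool) = u0 :=
      Fin.insertNth_self_removeNth i u0
    calc hammingDist u0 (i.insertNth b w : Fin (n+1) → Bool)
        = hammingDist (i.insertNth (u0 i) (i.removeNth u0) : Fin (n+1) → Bool)
            (i.insertNth b w) := by rw [he]
      _ = (if u0 i = b then 0 else 1) + hammingDist (i.removeNth u0) w := ham_insertNth ..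
      _ = 1 := by rw [hu0.2, if_pos rfl, hadj]

lemma vB_split {n : ℕ} (i : Fin (n+1)) (H : Finset (Fin (n+1) → Bool)) :
    (vBoundary n ((H.filter (fun v => v i = false)).image (i.removeNth))).card
      + (vBoundary n ((H.filter (fun v => v i = true)).image (i.removeNth))).card
      ≤ (vBoundary (n+1) H).card := by
  set B0 := vBoundary n ((H.filter (fun v => v i = false)).image (i.removeNth))
  set B1 := vBoundary n ((H.filter (fun v => v i = true)).image (i.removeNth))
  have hinj : ∀ b : Bool, Function.Injective (fun w : Fin n → Bool => (i.insertNth b w : Fin (n+1) → Bool)) := by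
    intro b w1 w2 hww
    have := congrArg (i.removeNth) hww
    simpa using this
  have hsub0 : B0.image (fun w => (i.insertNth false w : Fin (n+1) → Bool)) ⊆ vBoundary (n+1) H := by
    intro v hv; rw [mem_image] at hv; obtain ⟨w, hw, rfl⟩ := hv; exact lift_mem i false H w hw
  have hsub1 : B1.image (fun w => (i.insertNth true w : Fin (n+1) → Bool)) ⊆ vBoundary (n+1) H := by
    intro v hv; rw [mem_image] at hv; obtain ⟨w, hw, rfl⟩ := hv; exact lift_mem i true H w hw
  have hdisj : Disjoint (B0.image (fun w => (i.insertNth false w : Fin (n+1) → Bool)))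
      (B1.image (fun w => (i.insertNth true w : Fin (n+1) → Bool))) := by
    rw [Finset.disjoint_left]
    rintro v hv0 hv1
    rw [mem_image] at hv0 hv1
    obtain ⟨w0, -, rfl⟩ := hv0
    obtain ⟨w1, -, he⟩ := hv1
    have := congrFun he i
    simp at this
  calc B0.card + B1.card
      = (B0.image (fun w => (i.insertNth false w : Fin (n+1) → Bool))).card
        + (B1.image (fun w => (i.insertNth true w : Fin (n+1) → Bool))).card := by
        rw [Finset.card_image_of_injective _ (hinj false),
          Finset.card_image_of_injective _ (hinj true)]
    _ = (B0.image _ ∪ B1.image _).card := (Finset.card_union_of_disjoint hdisj).symm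
    _ ≤ (vBoundary (n+1) H).card := Finset.card_le_card (Finset.union_subset hsub0 hsub1)

lemma removeNth_card {n : ℕ} (i : Fin (n+1)) (b : Bool) (H : Finset (Fin (n+1) → Bool)) :
    ((H.filter (fun v => v i = b)).image (i.removeNth)).card = (H.filter (fun v => v i = b)).card := by
  apply Finset.card_image_of_injOn
  intro v hv v' hv' hvv
  simp only [Finset.coe_filter, Set.mem_setOf_eq] at hv hv'
  have : (i.insertNth (v i) (i.removeNth v) : Fin (n+1) → Bool)
      = i.insertNth (v' i) (i.removeNth v') := by rw [hv.2, hv'.2, hvv]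
  rwa [Fin.insertNth_self_removeNth, Fin.insertNth_self_removeNth] at this

lemma arith_key (n a b B B0 B1 : ℕ) (ha : 1 ≤ a) (hb : 1 ≤ b)
    (iha : 2*n*a + 2 ≤ 2*B0 + a*(a+1)) (ihb : 2*n*b + 2 ≤ 2*B1 + b*(b+1))
    (hsp : B0 + B1 ≤ B) :
    2*(n+1)*(a+b) + 2 ≤ 2*B + (a+b)*((a+b)+1) := by
  zify at *
  nlinarith [mul_nonneg (by linarith : (0:ℤ) ≤ (a:ℤ) - 1) (by linarith : (0:ℤ) ≤ (b:ℤ) - 1)]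

lemma lower : ∀ n (H : Finset (Fin n → Bool)), H.Nonempty → H.card ≤ n + 1 →
    2*n*H.card + 2 ≤ 2*(vBoundary n H).card + H.card*(H.card+1) := by
  intro n
  induction n with
  | zero =>
    intro H hne hcard
    nlinarith [Finset.card_pos.mpr hne]
  | succ n ih =>
    intro H hne hcard
    rcases eq_or_lt_of_le (Finset.one_le_card.mpr hne) with h1 | h2
    · obtain ⟨v, rfl⟩ := Finset.card_eq_one.mp h1.symm
      have := vB_singleton v
      simp only [Finset.card_singleton]
      omega
    · -- card ≥ 2 : find splitting coordinate
      obtain ⟨v, hv, w, hw, hvw⟩ := Finset.one_lt_card.mp h2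
      obtain ⟨i, hi⟩ := Function.ne_iff.mp hvw
      have hwv : w i = ! v i := by
        revert hi; cases h1 : v i <;> cases h2 : w i <;> simp_all
      have hsplit : (H.filter (fun v => v i = false)).card
          + (H.filter (fun v => v i = true)).card = H.card := by
        have h3 := Finset.card_filter_add_card_filter_not
          (s := H) (p := fun v => v i = false)
        have h4 : H.filter (fun v => ¬ v i = false) = H.filter (fun v => v i = true) := by
          apply Finset.filter_congr; intro x _; simp
        rw [h4] at h3; exact h3
      have hne0 : (H.filter (fun v => v i = false)).Nonempty := by
        cases h1 : v i
        · exact ⟨v, Finset.mem_filter.mpr ⟨hv, h1⟩⟩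
        · exact ⟨w, Finset.mem_filter.mpr ⟨hw, by rw [hwv, h1]; rfl⟩⟩
      have hne1 : (H.filter (fun v => v i = true)).Nonempty := by
        cases h1 : v i
        · exact ⟨w, Finset.mem_filter.mpr ⟨hw, by rw [hwv, h1]; rfl⟩⟩
        · exact ⟨v, Finset.mem_filter.mpr ⟨hv, h1⟩⟩
      have hca := removeNth_card i false H
      have hcb := removeNth_card i true H
      have ha1 : 1 ≤ (H.filter (fun v => v i = false)).card := Finset.card_pos.mpr hne0
      have hb1 : 1 ≤ (H.filter (fun v => v i = true)).card := Finset.card_pos.mpr hne1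
      have hle0 : ((H.filter (fun v => v i = false)).image (i.removeNth)).card ≤ n + 1 := by
        rw [hca]; linarith
      have hle1 : ((H.filter (fun v => v i = true)).image (i.removeNth)).card ≤ n + 1 := by
        rw [hcb]; linarith
      have hme0 : ((H.filter (fun v => v i = false)).image (i.removeNth)).Nonempty := by
        rw [Finset.image_nonempty]; exact hne0
      have hme1 : ((H.filter (fun v => v i = true)).image (i.removeNth)).Nonempty := by
        rw [Finset.image_nonempty]; exact hne1
      have iha := ih ((H.filter (fun v => v i = false)).image (i.removeNth)) hme0 hle0
      have ihb := ih ((H.filter (fun v => v i = true)).image (i.removeNth)) hme1 hle1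
      rw [hca] at iha
      rw [hcb] at ihb
      have hsp := vB_split i H
      rw [← hsplit]
      exact arith_key n _ _ _ _ _ ha1 hb1 iha ihb hsp

section Star
variable {n k : ℕ}

def uu (n : ℕ) : Fin n → Bool := fun _ => false
def up1 (a : Fin n) : Fin n → Bool := Function.update (uu n) a true
def up2 (a b : Fin n) : Fin n → Bool := Function.update (up1 a) b true

lemma up1_apply (a x : Fin n) : up1 a x = if x = a then true else false := by
  simp [up1, Function.update_apply, uu]

lemma up2_apply (a b x : Fin n) :
    up2 a b x = if x = b then true else if x = a then true else false := by
  simp [up2, up1, Function.update_apply, uu]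

lemma up1_inj {a b : Fin n} (h : up1 a = up1 b) : a = b := by
  have := congrFun h a
  rw [up1_apply, up1_apply, if_pos rfl] at this
  by_contra hab
  rw [if_neg hab] at this
  exact Bool.true_eq_false.mp this

lemma uu_ne_up1 (a : Fin n) : uu n ≠ up1 a := by
  intro h
  have := congrFun h a
  rw [up1_apply, if_pos rfl] at this
  exact Bool.false_ne_true (by simpa [uu] using this)

lemma uu_ne_up2 (a b : Fin n) : uu n ≠ up2 a b := by
  intro h
  have := congrFun h b
  rw [up2_apply, if_pos rfl] at this
  exact Bool.false_ne_true (by simpa [uu] using this)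

lemma up1_ne_up2 {c a b : Fin n} (hab : a ≠ b) : up1 c ≠ up2 a b := by
  intro h
  have h1 := congrFun h a
  have h2 := congrFun h b
  rw [up1_apply, up2_apply] at h1
  rw [up1_apply, up2_apply] at h2
  by_cases hca : a = c <;> by_cases hcb : b = c <;>
    simp [hca, hcb, hab, Ne.symm hab] at h1 h2 <;> exact hab (hca.trans hcb.symm) 

lemma up2_comm (a b : Fin n) (hab : a ≠ b) : up2 a b = up2 b a := by
  funext x
  rw [up2_apply, up2_apply]
  by_cases h1 : x = a <;> by_cases h2 : x = b <;> simp [h1, h2]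

lemma ham_uu_up1 (a : Fin n) : hammingDist (uu n) (up1 a) = 1 := ham_update_ne (uu n) a

lemma ham_up1_up2 {a b : Fin n} (hab : b ≠ a) : hammingDist (up1 a) (up2 a b) = 1 := by
  have hb : up1 a b = false := by rw [up1_apply, if_neg hab]
  have : up2 a b = Function.update (up1 a) b (!(up1 a b)) := by rw [hb]; rfl
  rw [this]
  exact ham_update_ne (up1 a) b

lemma ham_up1_up1 {a b : Fin n} (hab : a ≠ b) : hammingDist (up1 a) (up1 b) = 2 := by
  have : ({i | up1 a i ≠ up1 b i} : Finset (Fin n)) = {a, b} := by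
    ext x
    simp only [mem_filter, mem_univ, true_and, mem_insert, mem_singleton, up1_apply]
    by_cases h1 : x = a <;> by_cases h2 : x = b <;>
      simp [h1, h2, hab, Ne.symm hab]
  rw [hammingDist, this, Finset.card_pair hab]

end Star

section Star2
variable {n k : ℕ}

def SS (n k : ℕ) : Finset (Fin n → Bool) :=
  insert (uu n) ((univ.filter (fun i : Fin n => (i : ℕ) < k)).image up1)

lemma mem_SS {v : Fin n → Bool} :
    v ∈ SS n k ↔ v = uu n ∨ ∃ a : Fin n, (a : ℕ) < k ∧ v = up1 a := by
  simp only [SS, mem_insert, mem_image, mem_filter, mem_univ, true_and]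
  constructor
  · rintro (h | ⟨a, ha, rfl⟩)
    · exact Or.inl h
    · exact Or.inr ⟨a, ha, rfl⟩
  · rintro (h | ⟨a, ha, rfl⟩)
    · exact Or.inl h
    · exact Or.inr ⟨a, ha, rfl⟩

lemma card_lt_filt (hk : k ≤ n) :
    #(univ.filter (fun i : Fin n => (i : ℕ) < k)) = k := by
  have he : (univ.filter (fun i : Fin n => (i : ℕ) < k))
      = (Finset.range k).attachFin (fun m hm => lt_of_lt_of_le (mem_range.mp hm) hk) := by
    ext x
    simp [Finset.mem_attachFin]
  rw [he, Finset.card_attachFin, Finset.card_range]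

lemma card_SS (hk : k ≤ n) : (SS n k).card = k + 1 := by
  rw [SS, Finset.card_insert_of_notMem, Finset.card_image_of_injective _ (fun a b h => up1_inj h),
    card_lt_filt hk]
  rw [mem_image]
  rintro ⟨a, -, ha⟩
  exact uu_ne_up1 a ha.symm

def AA (n k : ℕ) : Finset (Fin n → Bool) :=
  (univ.filter (fun i : Fin n => k ≤ (i : ℕ))).image up1

def PP (n k : ℕ) : Finset (Fin n × Fin n) :=
  (univ ×ˢ univ).filter (fun p : Fin n × Fin n => (p.1 : ℕ) < k ∧ (p.1 : ℕ) < (p.2 : ℕ))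

def BB (n k : ℕ) : Finset (Fin n → Bool) := (PP n k).image (fun p => up2 p.1 p.2)

lemma up2_true_iff (a b x : Fin n) : up2 a b x = true ↔ x = a ∨ x = b := by
  rw [up2_apply]
  by_cases h1 : x = a <;> by_cases h2 : x = b <;> simp [h1, h2]

lemma mem_AA {v : Fin n → Bool} : v ∈ AA n k ↔ ∃ a : Fin n, k ≤ (a : ℕ) ∧ v = up1 a := by
  simp only [AA, mem_image, mem_filter, mem_univ, true_and]
  constructor
  · rintro ⟨a, ha, rfl⟩; exact ⟨a, ha, rfl⟩
  · rintro ⟨a, ha, rfl⟩; exact ⟨a, ha, rfl⟩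

lemma mem_BB {v : Fin n → Bool} :
    v ∈ BB n k ↔ ∃ a b : Fin n, (a : ℕ) < k ∧ (a : ℕ) < (b : ℕ) ∧ v = up2 a b := by
  simp only [BB, PP, mem_image, mem_filter, mem_product, mem_univ, true_and]
  constructor
  · rintro ⟨⟨a, b⟩, ⟨ha, hb⟩, rfl⟩; exact ⟨a, b, ha, hb, rfl⟩
  · rintro ⟨a, b, ha, hb, rfl⟩; exact ⟨⟨a, b⟩, ⟨ha, hb⟩, rfl⟩

lemma vB_SS (hk : k ≤ n) : vBoundary n (SS n k) = AA n k ∪ BB n k := by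
  ext v
  rw [mem_vB, Finset.mem_union, mem_AA, mem_BB]
  constructor
  · rintro ⟨hvn, s, hs, hdist⟩
    rw [mem_SS] at hs
    rcases hs with rfl | ⟨a, hak, rfl⟩
    · obtain ⟨i, rfl⟩ := (ham_one_iff _ _).mp hdist
      left
      refine ⟨i, ?_, rfl⟩
      by_contra hik
      exact hvn (mem_SS.mpr (Or.inr ⟨i, lt_of_not_ge hik, rfl⟩))
    · obtain ⟨x, rfl⟩ := (ham_one_iff _ _).mp hdist
      by_cases hxa : x = a
      · exfalso
        apply hvn
        subst hxa
        have : Function.update (up1 x) x (!up1 x x) = uu n := by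
          rw [show up1 x x = true from by rw [up1_apply, if_pos rfl]]
          show Function.update (Function.update (uu n) x true) x false = uu n
          rw [Function.update_idem]
          rw [show (false = uu n x) from rfl]
          exact Function.update_eq_self x (uu n)
        rw [this]
        exact mem_SS.mpr (Or.inl rfl)
      · have hval : up1 a x = false := by rw [up1_apply, if_neg hxa]
        have hv2 : Function.update (up1 a) x (!up1 a x) = up2 a x := by
          rw [hval]; rfl
        rw [hv2]
        right
        rcases lt_trichotomy (a : ℕ) (x : ℕ) with hlt | heq | hgt
        · exact ⟨a, x, hak, hlt, rfl⟩
        · exact absurd (Fin.ext heq) (fun h => hxa h.symm)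
        · exact ⟨x, a, lt_trans hgt hak, hgt, up2_comm a x (fun h => hxa h.symm)⟩
  · rintro (⟨a, hak, rfl⟩ | ⟨a, b, hak, hab, rfl⟩)
    · constructor
      · rw [mem_SS]
        rintro (h | ⟨c, hck, hc⟩)
        · exact uu_ne_up1 a h.symm
        · exact absurd hak (by rw [up1_inj hc]; omega)
      · exact ⟨uu n, mem_SS.mpr (Or.inl rfl), ham_uu_up1 a⟩
    · have habf : a ≠ b := fun h => by subst h; omega
      constructor
      · rw [mem_SS]
        rintro (h | ⟨c, hck, hc⟩)
        · exact uu_ne_up2 a b h.symm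
        · exact up1_ne_up2 habf hc.symm
      · exact ⟨up1 a, mem_SS.mpr (Or.inr ⟨a, hak, rfl⟩),
          ham_up1_up2 (fun h => habf h.symm)⟩

lemma card_AA (hk : k ≤ n) : (AA n k).card = n - k := by
  rw [AA, Finset.card_image_of_injective _ (fun a b h => up1_inj h)]
  have h1 := Finset.card_filter_add_card_filter_not
    (s := (univ : Finset (Fin n))) (p := fun i => (i : ℕ) < k)
  have h2 : (univ.filter (fun i : Fin n => ¬ (i : ℕ) < k))
      = univ.filter (fun i : Fin n => k ≤ (i : ℕ)) := by
    apply Finset.filter_congr; intro x _; simp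
  rw [h2, card_lt_filt hk, card_univ, Fintype.card_fin] at h1
  omega

lemma card_BB : (BB n k).card = (PP n k).card := by
  apply Finset.card_image_of_injOn
  intro p hp q hq hpq
  simp only [PP, Finset.coe_filter, Set.mem_setOf_eq] at hp hq
  simp only at hpq
  have k1 : up2 q.1 q.2 p.1 = true := by rw [← hpq, up2_true_iff]; exact Or.inl rfl
  have k2 : up2 q.1 q.2 p.2 = true := by rw [← hpq, up2_true_iff]; exact Or.inr rfl
  have k3 : up2 p.1 p.2 q.1 = true := by rw [hpq, up2_true_iff]; exact Or.inl rfl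
  rw [up2_true_iff] at k1 k2 k3
  have e1 : p.1 = q.1 ∨ p.1 = q.2 := k1
  have e2 : p.2 = q.1 ∨ p.2 = q.2 := k2
  have e3 : q.1 = p.1 ∨ q.1 = p.2 := k3
  have hv1 : (p.1 : ℕ) < (p.2 : ℕ) := hp.2.2
  have hv2 : (q.1 : ℕ) < (q.2 : ℕ) := hq.2.2
  have : (p.1 : ℕ) = (q.1 : ℕ) ∧ (p.2 : ℕ) = (q.2 : ℕ) := by
    rcases e1 with h | h <;> rcases e2 with h' | h' <;> rcases e3 with h'' | h'' <;>
      simp only [Fin.ext_iff] at h h' h'' <;> omega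
  exact Prod.ext (Fin.ext this.1) (Fin.ext this.2)

lemma card_PP : ∀ k, k ≤ n → 2 * (PP n k).card + k * (k - 1) = 2 * ((n - 1) * k) := by
  intro k
  induction k with
  | zero => simp [PP]
  | succ k ih =>
    intro hk
    have hkn : k < n := hk
    set c : Fin n := ⟨k, hkn⟩ with hc
    have hsplit : PP n (k + 1) = PP n k ∪ ({c} ×ˢ Finset.Ioi c) := by
      ext p
      simp only [PP, mem_filter, mem_product, mem_univ, true_and, Finset.mem_union,
        Finset.mem_singleton, Finset.mem_Ioi, Fin.lt_def, Fin.ext_iff, hc]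
      omega
    have hdisj : Disjoint (PP n k) ({c} ×ˢ Finset.Ioi c) := by
      rw [Finset.disjoint_left]
      rintro p hp hp2
      simp only [PP, mem_filter] at hp
      simp only [mem_product, Finset.mem_singleton] at hp2
      have : (p.1 : ℕ) = k := by rw [hp2.1]
      omega
    have hcard2 : ({c} ×ˢ Finset.Ioi c).card = n - 1 - k := by
      rw [Finset.card_product, Finset.card_singleton, Fin.card_Ioi, one_mul]
    rw [hsplit, Finset.card_union_of_disjoint hdisj, hcard2]
    have ihk := ih (le_of_lt hkn)
    have hms : (n - 1) * (k + 1) = (n - 1) * k + (n - 1) := Nat.mul_succ _ _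
    have hkk : (k + 1) * ((k + 1) - 1) = k * (k - 1) + 2 * k := by
      cases k with
      | zero => simp
      | succ m => simp only [Nat.add_sub_cancel]; ring
    rw [hms, hkk]
    omega

end Star2

section Star3
variable {n k : ℕ}

lemma AA_disj_BB : Disjoint (AA n k) (BB n k) := by
  rw [Finset.disjoint_left]
  intro v hva hvb
  rw [mem_AA] at hva
  rw [mem_BB] at hvb
  obtain ⟨i, -, rfl⟩ := hva
  obtain ⟨a, b, -, hab, he⟩ := hvb
  exact up1_ne_up2 (fun h => by subst h; omega) he

lemma two_choose (k : ℕ) : 2 * k.choose 2 = k * (k - 1) := by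
  induction k with
  | zero => simp
  | succ m ih =>
    rw [Nat.choose_succ_succ, Nat.choose_one_right, Nat.mul_add, ih, Nat.add_sub_cancel]
    cases m with
    | zero => simp
    | succ l => simp only [Nat.add_sub_cancel]; ring

lemma count_SS (hk : k ≤ n) :
    (vBoundary n (SS n k)).card + k.choose 2 = (n - k) + (n - 1) * k := by
  rw [vB_SS hk, Finset.card_union_of_disjoint AA_disj_BB, card_AA hk, card_BB]
  have h1 := card_PP (n := n) k hk
  have h2 := two_choose k
  generalize (n - 1) * k = X at *
  generalize k * (k - 1) = Y at *
  omega

lemma iso_SS (hk : k ≤ n) :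
    Nonempty (((Qube n).induce (↑(SS n k) : Set (Fin n → Bool))) ≃g
      completeBipartiteGraph (Fin 1) (Fin k)) := by
  classical
  let f : Sum (Fin 1) (Fin k) → (↑(SS n k) : Set (Fin n → Bool)) := fun x =>
    match x with
    | Sum.inl _ => ⟨uu n, by simp only [Finset.mem_coe]; exact mem_SS.mpr (Or.inl rfl)⟩
    | Sum.inr j => ⟨up1 ⟨(j : ℕ), lt_of_lt_of_le j.isLt hk⟩, by
        simp only [Finset.mem_coe]
        exact mem_SS.mpr (Or.inr ⟨⟨(j : ℕ), lt_of_lt_of_le j.isLt hk⟩, j.isLt, rfl⟩)⟩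
  have hinj : Function.Injective f := by
    rintro (x | x) (y | y) hxy
    · rw [Subsingleton.elim x y]
    · exact absurd (congrArg Subtype.val hxy) (uu_ne_up1 _)
    · exact absurd (congrArg Subtype.val hxy).symm (uu_ne_up1 _)
    · have h0 := up1_inj (congrArg Subtype.val hxy)
      have hval : (x : ℕ) = (y : ℕ) := by simpa using h0
      exact congrArg Sum.inr (Fin.ext hval)
  have hsurj : Function.Surjective f := by
    rintro ⟨v, hv⟩
    rw [Finset.mem_coe, mem_SS] at hv
    rcases hv with rfl | ⟨a, hak, rfl⟩
    · exact ⟨Sum.inl 0, rfl⟩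
    · refine ⟨Sum.inr ⟨(a : ℕ), hak⟩, ?_⟩
      apply Subtype.ext
      exact congrArg up1 (Fin.ext rfl)
  refine ⟨(RelIso.mk (Equiv.ofBijective f ⟨hinj, hsurj⟩) ?_).symm⟩
  rintro (x | x) (y | y)
  · constructor
    · intro hadj
      have h1 : hammingDist (uu n) (uu n) = 1 := hadj
      simp at h1
    · intro hra
      simp [completeBipartiteGraph] at hra
  · constructor
    · intro _; simp [completeBipartiteGraph]
    · intro _
      show hammingDist (uu n) (up1 _) = 1
      exact ham_uu_up1 _
  · constructor
    · intro _; simp [completeBipartiteGraph]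
    · intro _
      show hammingDist (up1 _) (uu n) = 1
      rw [hammingDist_comm]
      exact ham_uu_up1 _
  · constructor
    · intro hadj
      exfalso
      have h1 : hammingDist (up1 (⟨(x : ℕ), lt_of_lt_of_le x.isLt hk⟩ : Fin n))
          (up1 (⟨(y : ℕ), lt_of_lt_of_le y.isLt hk⟩ : Fin n)) = 1 := hadj
      rcases eq_or_ne (x : ℕ) (y : ℕ) with hxy | hxy
      · have hc : (⟨(x : ℕ), lt_of_lt_of_le x.isLt hk⟩ : Fin n)
            = ⟨(y : ℕ), lt_of_lt_of_le y.isLt hk⟩ := Fin.ext hxy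
        rw [hc] at h1
        simp at h1
      · have h2 := ham_up1_up1 (n := n)
          (show (⟨(x : ℕ), lt_of_lt_of_le x.isLt hk⟩ : Fin n)
            ≠ ⟨(y : ℕ), lt_of_lt_of_le y.isLt hk⟩ from
            fun hc => hxy (by simpa using hc))
        rw [h1] at h2
        exact absurd h2 (by norm_num)
    · intro hra
      exfalso
      simp [completeBipartiteGraph] at hra
end Star3

theorem stmt16 (n h : ℕ) (h1 : 1 ≤ h) (h2 : h ≤ n + 1)
    (u : Fin n → Bool) (hu : u = fun _ => false)
    (Sh : Finset (Fin n → Bool))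
    (hSh : Sh = insert u
      ((Finset.univ.filter (fun i : Fin n => (i : ℕ) < h - 1)).image
        (fun i => Function.update u i true))) :
    Nonempty (((Qube n).induce (↑Sh : Set (Fin n → Bool))) ≃g
      completeBipartiteGraph (Fin 1) (Fin (h - 1))) ∧
    (vBoundary n Sh).card = (n + 1 - h) + (n - 1) * (h - 1) - Nat.choose (h - 1) 2 ∧
    (2 ≤ h →
      ((vBoundary n Sh).card = bv n h ∧
        2 * ((vBoundary n Sh).card : ℤ) = -(h : ℤ)^2 + (2 * n - 1) * h + 2)) := by
  subst hu
  subst hSh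
  obtain ⟨k, rfl⟩ : ∃ k, h = k + 1 := ⟨h - 1, by omega⟩
  have hk : k ≤ n := by omega
  have hS : (insert (fun _ => false : Fin n → Bool)
      ((Finset.univ.filter (fun i : Fin n => (i : ℕ) < k + 1 - 1)).image
        (fun i => Function.update (fun _ => false : Fin n → Bool) i true))) = SS n k := by
    simp only [Nat.add_sub_cancel]
    rfl
  rw [hS]
  simp only [Nat.add_sub_cancel]
  have hcount := count_SS (n := n) (k := k) hk
  refine ⟨iso_SS hk, ?_, ?_⟩
  · have h1e : n + 1 - (k + 1) = n - k := by omega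
    rw [h1e]
    exact Nat.eq_sub_of_add_eq hcount
  · intro h2k
    have hk1 : 1 ≤ k := by omega
    have hn1 : 1 ≤ n := by omega
    have h2c := two_choose k
    have E : 2 * (vBoundary n (SS n k)).card + (k + 1) * ((k + 1) + 1)
        = 2 * n * (k + 1) + 2 := by
      zify [hk, hn1, hk1] at hcount h2c ⊢
      linear_combination 2 * hcount - h2c
    constructor
    · have hmem : (vBoundary n (SS n k)).card ∈
          {m | ∃ H : Finset (Fin n → Bool), H.card = k + 1 ∧ (vBoundary n H).card = m} :=
        ⟨SS n k, card_SS hk, rfl⟩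
      unfold bv
      apply le_antisymm
      · apply le_csInf ⟨_, hmem⟩
        rintro x ⟨H, hH, rfl⟩
        have hl := lower n H (Finset.card_pos.mp (by omega)) (by omega)
        rw [hH] at hl
        linarith [E, hl]
      · exact Nat.sInf_le hmem

    · have E' : 2 * ((vBoundary n (SS n k)).card : ℤ) + ((k : ℤ) + 1) * (((k : ℤ) + 1) + 1)
          = 2 * (n : ℤ) * ((k : ℤ) + 1) + 2 := by exact_mod_cast E
      push_cast
      linear_combination E'
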